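/- arXiv:1402.4112 — 2 statements merged into one kernel-verified Lean document; each statement's English description precedes it below -/
import Mathlib

section
/- Let (A_n)_{n=0}^∞ be an increasing sequence of finite nonempty alphabets with union A, let k ∈ ℕ, let E ⊆ W(A), and let 𝐬 = (s_n(x))_{n=0}^∞ be an infinite sequence of variable words over A such that E is k-large in 𝐬. Then there exist m ∈ ℕ and a variable word w(x) ∈ ⟨(s_n(x))_{n=0}^m ∥ (A_{k+n})_{n=0}^m⟩_v such that {w(a) : a ∈ A_k} ⊆ E. -/
/- Words over an alphabet are `List α`.  The variable symbol `x` is modelled by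
`none : Option α`, and variable words are lists over `Option α` containing `none`. -/

namespace HJ

variable {α : Type*}

/-- Substitution of the letter `a` for every occurrence of the variable in a
variable word, producing a constant word. -/
def substC (s : List (Option α)) (a : α) : List α :=
  s.map (fun b => b.getD a)

/-- Substitution of `b ∈ A ∪ {x}` (a letter `some a` or the variable `none`)
for every occurrence of the variable. -/
def substV (s : List (Option α)) (b : Option α) : List (Option α) :=
  s.map (fun c => Option.elim c b some)

/-- `s` is a variable word over the alphabet `S`: all its letters lie in `S`
and it contains at least one occurrence of the variable. -/
def IsVarWord (S : Set α) (s : List (Option α)) : Prop :=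
  (∀ a : α, some a ∈ s → a ∈ S) ∧ none ∈ s

/-- `W(S)`: the set of (constant) words over the alphabet `S`. -/
def WordsOver (S : Set α) : Set (List α) :=
  { w | ∀ a ∈ w, a ∈ S }

/-- The constant span of the sequence `s` of variable words, with indices
restricted to `I` and the letter substituted at position `l i` taken from the
alphabet `B (l i)`: all concatenations `s_{l_0}(a_0) ⋯ s_{l_n}(a_n)` with
`l_0 < ⋯ < l_n` in `I` and `a_i ∈ B (l_i)`. -/
def constSpan (B : ℕ → Set α) (s : ℕ → List (Option α)) (I : Set ℕ) :
    Set (List α) :=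
  { w | ∃ (n : ℕ) (l : Fin (n + 1) → ℕ) (a : Fin (n + 1) → α),
      StrictMono l ∧ (∀ i, l i ∈ I) ∧ (∀ i, a i ∈ B (l i)) ∧
      w = (List.ofFn fun i => substC (s (l i)) (a i)).flatten }

/-- The variable span of the sequence `s` of variable words, with indices
restricted to `I` and alphabets given by `B`: all concatenations
`s_{l_0}(b_0) ⋯ s_{l_n}(b_n)` with `l_0 < ⋯ < l_n` in `I` and
`b_i ∈ B (l_i) ∪ {x}` which contain at least one occurrence of the variable. -/
def varSpan (B : ℕ → Set α) (s : ℕ → List (Option α)) (I : Set ℕ) :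
    Set (List (Option α)) :=
  { w | ∃ (n : ℕ) (l : Fin (n + 1) → ℕ) (b : Fin (n + 1) → Option α),
      StrictMono l ∧ (∀ i, l i ∈ I) ∧
      (∀ i, ∀ a : α, b i = some a → a ∈ B (l i)) ∧
      none ∈ w ∧
      w = (List.ofFn fun i => substV (s (l i)) (b i)).flatten }

/-- `(t_0, …, t_l)` is a finite extracted subsequence of `s` (with alphabets `B`):
there are `0 = m_0 < m_1 < ⋯` with `t_i` in the variable span of
`(s_n)_{n = m_i}^{m_{i+1} - 1}` (with alphabets `B`) for all `i ≤ l`. -/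
def ExtractedFin (B : ℕ → Set α) (s t : ℕ → List (Option α)) (l : ℕ) : Prop :=
  ∃ m : ℕ → ℕ, m 0 = 0 ∧ StrictMono m ∧
    ∀ i ≤ l, t i ∈ varSpan B s (Set.Ico (m i) (m (i + 1)))

/-- `t` is an infinite extracted subsequence of `s` (with alphabets `B`). -/
def Extracted (B : ℕ → Set α) (s t : ℕ → List (Option α)) : Prop :=
  ∀ l : ℕ, ExtractedFin B s t l

/-- `E` is large in `s` (with alphabets `B`): `E` meets the constant span of
every infinite extracted subsequence of `s`. -/
def IsLarge (B : ℕ → Set α) (E : Set (List α)) (s : ℕ → List (Option α)) : Prop :=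
  ∀ w : ℕ → List (Option α), Extracted B s w →
    (E ∩ constSpan B w Set.univ).Nonempty

/-- `E_F = {z ∈ W(S) : w ++ z ∈ E for every w ∈ F}`. -/
def wordQuot (S : Set α) (E F : Set (List α)) : Set (List α) :=
  { z | z ∈ WordsOver S ∧ ∀ w ∈ F, w ++ z ∈ E }

end HJ

namespace HJ

section Aux

variable {α : Type*}

instance {β : Type*} : IsTrans (ℕ × β) (fun p q => p.1 < q.1) :=
  ⟨fun _ _ _ h1 h2 => h1.trans h2⟩

theorem substV_none (t : List (Option α)) : substV t none = t := by
  unfold substV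
  have : (fun c : Option α => Option.elim c none some) = id := by
    funext c; cases c <;> rfl
  rw [this, List.map_id]

theorem substC_substV (t : List (Option α)) (b : Option α) (a : α) :
    substC (substV t b) a = substC t (b.getD a) := by
  unfold substC substV
  rw [List.map_map]
  congr 1
  funext c; cases c <;> cases b <;> rfl

theorem substC_append (u v : List (Option α)) (a : α) :
    substC (u ++ v) a = substC u a ++ substC v a := List.map_append

theorem substC_length (t : List (Option α)) (a : α) :
    (substC t a).length = t.length := List.length_map _

/-- One block of a variable span word. -/
def blockV (s : ℕ → List (Option α)) (p : ℕ × Option α) : List (Option α) :=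
  substV (s p.1) p.2

/-- The (variable) word determined by a list of (index, letter-or-variable) pairs. -/
def spanW (s : ℕ → List (Option α)) (L : List (ℕ × Option α)) : List (Option α) :=
  (L.map (blockV s)).flatten

/-- One block of a constant span word. -/
def blockC (s : ℕ → List (Option α)) (p : ℕ × α) : List α :=
  substC (s p.1) p.2

/-- The constant word determined by a list of (index, letter) pairs. -/
def spanCW (s : ℕ → List (Option α)) (L : List (ℕ × α)) : List α :=
  (L.map (blockC s)).flatten

/-- Side conditions for a list to determine an element of the variable span. -/
def GoodV (B : ℕ → Set α) (I : Set ℕ) (L : List (ℕ × Option α)) : Prop :=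
  L ≠ [] ∧ L.Chain' (fun p q => p.1 < q.1) ∧ (∀ p ∈ L, p.1 ∈ I) ∧
    ∀ p ∈ L, ∀ a : α, p.2 = some a → a ∈ B p.1

theorem spanW_append (s : ℕ → List (Option α)) (L1 L2 : List (ℕ × Option α)) :
    spanW s (L1 ++ L2) = spanW s L1 ++ spanW s L2 := by
  unfold spanW; rw [List.map_append, List.flatten_append]

theorem substC_spanW (s : ℕ → List (Option α)) (L : List (ℕ × Option α)) (a : α) :
    substC (spanW s L) a = spanCW s (L.map fun p => (p.1, p.2.getD a)) := by
  unfold spanW spanCW substC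
  rw [List.map_flatten, List.map_map, List.map_map]
  congr 1
  apply List.map_congr_left
  intro p _
  show substC (blockV s p) a = _
  simp only [blockV, blockC, Function.comp]
  rw [substC_substV]

theorem mem_varSpan_of_list {B : ℕ → Set α} {s : ℕ → List (Option α)} {I : Set ℕ}
    {L : List (ℕ × Option α)} (h : GoodV B I L) (hn : none ∈ spanW s L) :
    spanW s L ∈ varSpan B s I := by
  obtain ⟨hne, hch, hI, hB⟩ := h
  obtain ⟨n, hlen⟩ : ∃ n, L.length = n + 1 := by
    cases L with
    | nil => exact absurd rfl hne
    | cons x xs => exact ⟨xs.length, rfl⟩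
  have hget : ∀ i : Fin (n + 1), (i : ℕ) < L.length := fun i => by
    rw [hlen]; exact i.isLt
  refine ⟨n, fun i => (L[(i : ℕ)]'(hget i)).1, fun i => (L[(i : ℕ)]'(hget i)).2, ?_, ?_, ?_, hn, ?_⟩
  · intro i j hij
    have hp : L.Pairwise (fun p q => p.1 < q.1) := by
      rw [← List.isChain_iff_pairwise]; exact hch
    rw [List.pairwise_iff_getElem] at hp
    exact hp _ _ (hget i) (hget j) hij
  · intro i; exact hI _ (List.getElem_mem _)
  · intro i a ha; exact hB _ (List.getElem_mem _) a ha
  · unfold spanW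
    congr 1
    apply List.ext_getElem
    · rw [List.length_map, List.length_ofFn, hlen]
    · intro i h1 h2
      rw [List.getElem_map]
      rw [List.getElem_ofFn]
      rfl

theorem list_of_mem_varSpan {B : ℕ → Set α} {s : ℕ → List (Option α)} {I : Set ℕ}
    {w : List (Option α)} (h : w ∈ varSpan B s I) :
    ∃ L, GoodV B I L ∧ none ∈ w ∧ w = spanW s L := by
  obtain ⟨n, l, b, hmono, hI, hB, hn, hw⟩ := h
  refine ⟨List.ofFn (fun i => (l i, b i)), ⟨?_, ?_, ?_, ?_⟩, hn, ?_⟩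
  · simp [List.ofFn_eq_nil_iff]
  · rw [List.Chain', List.isChain_iff_pairwise, List.pairwise_ofFn]
    intro i j hij; exact hmono hij
  · intro p hp
    rw [List.mem_ofFn] at hp
    obtain ⟨i, rfl⟩ := hp; exact hI i
  · intro p hp a ha
    rw [List.mem_ofFn] at hp
    obtain ⟨i, rfl⟩ := hp; exact hB i a ha
  · rw [hw]
    unfold spanW
    rw [List.map_ofFn]
    rfl

theorem list_of_mem_constSpan {B : ℕ → Set α} {s : ℕ → List (Option α)} {I : Set ℕ}
    {w : List α} (h : w ∈ constSpan B s I) :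
    ∃ L : List (ℕ × α), L ≠ [] ∧ L.Chain' (fun p q => p.1 < q.1) ∧ (∀ p ∈ L, p.1 ∈ I) ∧
      (∀ p ∈ L, p.2 ∈ B p.1) ∧ w = spanCW s L := by
  obtain ⟨n, l, a, hmono, hI, hB, hw⟩ := h
  refine ⟨List.ofFn (fun i => (l i, a i)), ?_, ?_, ?_, ?_, ?_⟩
  · simp [List.ofFn_eq_nil_iff]
  · rw [List.Chain', List.isChain_iff_pairwise, List.pairwise_ofFn]
    intro i j hij; exact hmono hij
  · intro p hp
    rw [List.mem_ofFn] at hp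
    obtain ⟨i, rfl⟩ := hp; exact hI i
  · intro p hp
    rw [List.mem_ofFn] at hp
    obtain ⟨i, rfl⟩ := hp; exact hB i
  · rw [hw]
    unfold spanCW
    rw [List.map_ofFn]
    rfl

end Aux

end HJ

namespace HJ

section Step

variable {α : Type*}

theorem mem_of_mem_getLast?' {β : Type*} {l : List β} {x : β}
    (h : x ∈ l.getLast?) : x ∈ l := by
  obtain ⟨h1, rfl⟩ := List.mem_getLast?_eq_getLast h
  exact List.getLast_mem h1

theorem step_lemma (A : ℕ → Finset α) (hmono : Monotone A) (k : ℕ) (E : Set (List α))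
    (s : ℕ → List (Option α)) (hs : ∀ n, IsVarWord (⋃ n, (A n : Set α)) (s n))
    (Hno : ¬ ∃ (m : ℕ) (w : List (Option α)),
      w ∈ varSpan (fun n => (A (k + n) : Set α)) s (Set.Iic m) ∧ ∀ a ∈ A k, substC w a ∈ E)
    (n start : ℕ) (hstart : n ≤ start) (P : Finset (List α))
    (hP : ∀ u ∈ P, ∃ L : List (ℕ × α), L.Chain' (fun p q => p.1 < q.1) ∧
      (∀ p ∈ L, p.1 < start ∧ p.2 ∈ A (k + p.1)) ∧ u = spanCW s L) :
    ∃ (M : ℕ) (Lv : List (ℕ × Option α)),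
      start < M ∧ GoodV (fun j => (A (k + j) : Set α)) (Set.Ico start M) Lv ∧
      none ∈ spanW s Lv ∧
      ∀ u ∈ P, ∀ a ∈ A (k + n), u ++ substC (spanW s Lv) a ∉ E := by
  classical
  obtain ⟨ι, _inst, hι⟩ :=
    Combinatorics.Line.exists_mono_in_high_dimension (↥(A (k + n))) ({u // u ∈ P} → Bool)
  set N := Fintype.card ι with hN
  set e : ι ≃ Fin N := Fintype.equivFin ι with he
  set cw : (ι → ↥(A (k + n))) → List (ℕ × α) := fun f =>
    List.ofFn (fun p : Fin N => (start + (p : ℕ), ((f (e.symm p)) : α))) with hcw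
  set C : (ι → ↥(A (k + n))) → ({u // u ∈ P} → Bool) := fun f u =>
    decide (u.val ++ spanCW s (cw f) ∈ E) with hC
  obtain ⟨l, c, hc⟩ := hι C
  obtain ⟨i0, hi0⟩ := l.proper
  have hNpos : 0 < N := Fintype.card_pos_iff.mpr ⟨i0⟩
  set Lv : List (ℕ × Option α) :=
    List.ofFn (fun p : Fin N =>
      (start + (p : ℕ), Option.map Subtype.val (l.idxFun (e.symm p)))) with hLvdef
  -- Good side conditions
  have hGood : GoodV (fun j => (A (k + j) : Set α)) (Set.Ico start (start + N)) Lv := by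
    refine ⟨?_, ?_, ?_, ?_⟩
    · rw [hLvdef, Ne, List.ofFn_eq_nil_iff]; omega
    · rw [hLvdef, List.Chain', List.isChain_iff_pairwise, List.pairwise_ofFn]
      intro i j hij
      simp only []
      omega
    · intro p hp
      rw [hLvdef, List.mem_ofFn] at hp
      obtain ⟨i, rfl⟩ := hp
      exact ⟨Nat.le_add_right _ _, by simpa using (by omega : start + (i : ℕ) < start + N)⟩
    · intro p hp a ha
      rw [hLvdef, List.mem_ofFn] at hp
      obtain ⟨i, rfl⟩ := hp
      simp only at ha
      rcases hidx : l.idxFun (e.symm i) with _ | g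
      · rw [hidx] at ha; simp at ha
      · rw [hidx] at ha
        simp only [Option.map_some] at ha
        obtain rfl : (g : α) = a := by injection ha
        exact hmono (by omega : k + n ≤ k + (start + (i : ℕ))) g.2
  -- the variable occurs
  have hnone : none ∈ spanW s Lv := by
    show none ∈ (List.map (blockV s) Lv).flatten
    rw [List.mem_flatten]
    refine ⟨blockV s (start + ((e i0) : ℕ), Option.map Subtype.val (l.idxFun (e.symm (e i0)))), ?_, ?_⟩
    · apply List.mem_map_of_mem
      rw [hLvdef, List.mem_ofFn]
      exact ⟨e i0, rfl⟩
    · rw [Equiv.symm_apply_apply, hi0]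
      show none ∈ substV (s _) none
      rw [substV_none]
      exact (hs _).2
  -- substitution computes to the colored constant word
  have hsub : ∀ (a : α) (ha : a ∈ A (k + n)),
      substC (spanW s Lv) a = spanCW s (cw (l ⟨a, ha⟩)) := by
    intro a ha
    rw [substC_spanW]
    congr 1
    rw [hLvdef, List.map_ofFn, hcw]
    simp only []
    apply congrArg List.ofFn
    funext p
    simp only [Function.comp]
    refine Prod.ext rfl ?_
    show (Option.map Subtype.val (l.idxFun (e.symm p))).getD a
      = ((l.idxFun (e.symm p)).getD ⟨a, ha⟩ : ↥(A (k + n))).val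
    rcases hidx : l.idxFun (e.symm p) with _ | g <;> simp [hidx]
  -- every color is false
  have hfalse : ∀ (u : List α) (hu : u ∈ P), c ⟨u, hu⟩ = false := by
    intro u hu
    by_contra hcu
    rw [Bool.not_eq_false] at hcu
    have htrue : ∀ x : ↥(A (k + n)), u ++ spanCW s (cw (l x)) ∈ E := by
      intro x
      have := congrFun (hc x) ⟨u, hu⟩
      rw [hcu, hC] at this
      exact of_decide_eq_true this
    obtain ⟨Lu, hLuch, hLucond, hLueq⟩ := hP u hu
    set LuV : List (ℕ × Option α) := Lu.map (fun p => (p.1, some p.2)) with hLuV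
    refine Hno ⟨start + N, spanW s (LuV ++ Lv), ?_, ?_⟩
    · apply mem_varSpan_of_list
      · refine ⟨?_, ?_, ?_, ?_⟩
        · intro hcon
          exact hGood.1 (by simpa using (List.append_eq_nil_iff.mp hcon).2)
        · apply List.IsChain.append
          · rw [hLuV, List.isChain_map]
            exact hLuch
          · exact hGood.2.1
          · intro x hx y hy
            have hx' : x ∈ LuV := mem_of_mem_getLast?' hx
            have hy' : y ∈ Lv := List.mem_of_mem_head? hy
            rw [hLuV, List.mem_map] at hx'
            obtain ⟨p, hp, rfl⟩ := hx'
            have h1 : p.1 < start := (hLucond p hp).1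
            have h2 : start ≤ y.1 := (hGood.2.2.1 y hy').1
            exact lt_of_lt_of_le h1 h2
        · intro p hp
          rw [List.mem_append] at hp
          rcases hp with hp | hp
          · rw [hLuV, List.mem_map] at hp
            obtain ⟨q, hq, rfl⟩ := hp
            exact le_of_lt (lt_of_lt_of_le (hLucond q hq).1 (Nat.le_add_right _ _))
          · exact le_of_lt (hGood.2.2.1 p hp).2
        · intro p hp a ha
          rw [List.mem_append] at hp
          rcases hp with hp | hp
          · rw [hLuV, List.mem_map] at hp
            obtain ⟨q, hq, rfl⟩ := hp
            cases ha
            exact (hLucond q hq).2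
          · exact hGood.2.2.2 p hp a ha
      · rw [spanW_append, List.mem_append]
        exact Or.inr hnone
    · intro a haAk
      have ha : a ∈ A (k + n) := hmono (Nat.le_add_right k n) haAk
      rw [spanW_append, substC_append]
      have h1 : substC (spanW s LuV) a = u := by
        rw [substC_spanW, hLuV, List.map_map]
        have : ((fun p : ℕ × Option α => (p.1, p.2.getD a)) ∘ fun p : ℕ × α => (p.1, some p.2))
            = id := by funext p; rfl
        rw [this, List.map_id, hLueq]
      rw [h1, hsub a ha]
      exact htrue ⟨a, ha⟩
  refine ⟨start + N, Lv, by omega, hGood, hnone, ?_⟩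
  intro u hu a ha hmem
  have := congrFun (hc ⟨a, ha⟩) ⟨u, hu⟩
  rw [hfalse u hu, hC] at this
  rw [hsub a ha] at hmem
  simp only at this
  rw [decide_eq_false_iff_not] at this
  exact this hmem

end Step

end HJ

namespace HJ

section Rec

variable {α : Type*}

theorem spanCW_append (s : ℕ → List (Option α)) (L1 L2 : List (ℕ × α)) :
    spanCW s (L1 ++ L2) = spanCW s L1 ++ spanCW s L2 := by
  unfold spanCW; rw [List.map_append, List.flatten_append]

/-- The invariant carried through the recursive construction. -/
def StInv (A : ℕ → Finset α) (k : ℕ) (E : Set (List α)) (s : ℕ → List (Option α))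
    (n : ℕ) (st : ℕ × Finset (List α)) : Prop :=
  n ≤ st.1 ∧ [] ∈ st.2 ∧
    ∀ u ∈ st.2, (u ≠ [] → u ∉ E) ∧
      ∃ L : List (ℕ × α), L.Chain' (fun p q => p.1 < q.1) ∧
        (∀ p ∈ L, p.1 < st.1 ∧ p.2 ∈ A (k + p.1)) ∧ u = spanCW s L

open Classical in
/-- The new collection of forbidden prefixes. -/
noncomputable def newP (A : ℕ → Finset α) (k : ℕ) (n : ℕ)
    (P : Finset (List α)) (v : List (Option α)) : Finset (List α) :=
  P ∪ (P ×ˢ A (k + n)).image (fun q => q.1 ++ substC v q.2)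

theorem exists_next (A : ℕ → Finset α) (hmono : Monotone A) (k : ℕ) (E : Set (List α))
    (s : ℕ → List (Option α)) (hs : ∀ n, IsVarWord (⋃ n, (A n : Set α)) (s n))
    (Hno : ¬ ∃ (m : ℕ) (w : List (Option α)),
      w ∈ varSpan (fun n => (A (k + n) : Set α)) s (Set.Iic m) ∧ ∀ a ∈ A k, substC w a ∈ E)
    (n : ℕ) (st : ℕ × Finset (List α)) (h : StInv A k E s n st) :
    ∃ d : ℕ × List (ℕ × Option α),
      st.1 < d.1 ∧
      GoodV (fun j => (A (k + j) : Set α)) (Set.Ico st.1 d.1) d.2 ∧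
      none ∈ spanW s d.2 ∧
      (∀ u ∈ st.2, ∀ a ∈ A (k + n), u ++ substC (spanW s d.2) a ∉ E) ∧
      StInv A k E s (n + 1) (d.1, newP A k n st.2 (spanW s d.2)) := by
  classical
  obtain ⟨hle, hnil, hinv⟩ := h
  obtain ⟨M, Lv, hM, hGood, hnone, havoid⟩ := step_lemma A hmono k E s hs Hno n st.1 hle st.2
    (fun u hu => (hinv u hu).2)
  refine ⟨(M, Lv), hM, hGood, hnone, havoid, ?_⟩
  refine ⟨by omega, Finset.mem_union_left _ hnil, ?_⟩
  intro u hu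
  rw [newP, Finset.mem_union] at hu
  rcases hu with hu | hu
  · obtain ⟨hne, L, hch, hcond, heq⟩ := hinv u hu
    exact ⟨hne, L, hch,
      fun p hp => ⟨lt_of_lt_of_le (hcond p hp).1 (le_of_lt hM), (hcond p hp).2⟩, heq⟩
  · rw [Finset.mem_image] at hu
    obtain ⟨q, hq, rfl⟩ := hu
    rw [Finset.mem_product] at hq
    refine ⟨fun _ => havoid q.1 hq.1 q.2 hq.2, ?_⟩
    obtain ⟨-, Lu, hch, hcond, hueq⟩ := hinv q.1 hq.1
    refine ⟨Lu ++ Lv.map (fun p => (p.1, p.2.getD q.2)), ?_, ?_, ?_⟩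
    · apply List.IsChain.append hch
      · rw [List.isChain_map]
        exact hGood.2.1
      · intro x hx y hy
        have hx' : x ∈ Lu := mem_of_mem_getLast?' hx
        have hy' : y ∈ Lv.map (fun p => (p.1, p.2.getD q.2)) := List.mem_of_mem_head? hy
        rw [List.mem_map] at hy'
        obtain ⟨p, hp, rfl⟩ := hy'
        exact lt_of_lt_of_le (hcond x hx').1 (hGood.2.2.1 p hp).1
    · intro p hp
      rw [List.mem_append] at hp
      rcases hp with hp | hp
      · exact ⟨lt_of_lt_of_le (hcond p hp).1 (le_of_lt hM), (hcond p hp).2⟩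
      · rw [List.mem_map] at hp
        obtain ⟨p', hp', rfl⟩ := hp
        refine ⟨(hGood.2.2.1 p' hp').2, ?_⟩
        rcases hb : p'.2 with _ | b
        · simp only [hb, Option.getD_none]
          have h1 : k + n ≤ k + p'.1 := by
            have := (hGood.2.2.1 p' hp').1
            omega
          exact hmono h1 hq.2
        · simp only [hb, Option.getD_some]
          exact hGood.2.2.2 p' hp' b hb
    · rw [hueq, spanCW_append, substC_spanW]

/-- The recursive construction of the extracted subsequence avoiding `E`. -/
noncomputable def chainSt (A : ℕ → Finset α) (hmono : Monotone A) (k : ℕ) (E : Set (List α))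
    (s : ℕ → List (Option α)) (hs : ∀ n, IsVarWord (⋃ n, (A n : Set α)) (s n))
    (Hno : ¬ ∃ (m : ℕ) (w : List (Option α)),
      w ∈ varSpan (fun n => (A (k + n) : Set α)) s (Set.Iic m) ∧ ∀ a ∈ A k, substC w a ∈ E) :
    (n : ℕ) → {st : ℕ × Finset (List α) // StInv A k E s n st}
  | 0 => ⟨(0, {[]}), by
      refine ⟨le_refl 0, Finset.mem_singleton_self [], ?_⟩
      intro u hu
      rw [Finset.mem_singleton] at hu
      subst hu
      exact ⟨fun h => absurd rfl h, [], List.isChain_nil, by simp, rfl⟩⟩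
  | n + 1 =>
      let c := chainSt A hmono k E s hs Hno n
      let d := Classical.choose (exists_next A hmono k E s hs Hno n c.1 c.2)
      ⟨(d.1, newP A k n c.1.2 (spanW s d.2)),
        (Classical.choose_spec (exists_next A hmono k E s hs Hno n c.1 c.2)).2.2.2.2⟩

/-- Words in the constant span of the constructed sequence lie in the prefix sets. -/
theorem flatten_mem (A : ℕ → Finset α) (k : ℕ) (t : ℕ → List (Option α))
    (P : ℕ → Finset (List α))
    (h0 : ∀ j, [] ∈ P j) (hPm : ∀ i j, i ≤ j → P i ⊆ P j)
    (hstep : ∀ j u a, u ∈ P j → a ∈ A (k + j) → u ++ substC (t j) a ∈ P (j + 1)) :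
    ∀ (n : ℕ) (l : Fin (n + 1) → ℕ) (a : Fin (n + 1) → α), StrictMono l →
      (∀ i, a i ∈ A (k + l i)) →
      (List.ofFn fun i => substC (t (l i)) (a i)).flatten ∈ P (l (Fin.last n) + 1) := by
  intro n
  induction n with
  | zero =>
    intro l a _ ha
    have := hstep (l 0) [] (a 0) (h0 _) (ha 0)
    simpa using this
  | succ n ih =>
    intro l a hl ha
    rw [List.ofFn_succ', List.concat_eq_append, List.flatten_append]
    have h1 := ih (fun i => l i.castSucc) (fun i => a i.castSucc)
      (hl.comp Fin.strictMono_castSucc) (fun i => ha _)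
    have h2 : l ((Fin.last n).castSucc) + 1 ≤ l (Fin.last (n + 1)) :=
      hl (Fin.castSucc_lt_last _)
    have := hstep (l (Fin.last (n + 1))) _ (a (Fin.last (n + 1)))
      (hPm _ _ h2 h1) (ha (Fin.last (n + 1)))
    simpa using this

end Rec

end HJ

open HJ in
/-- Fact 3.8: a `k`-large set contains `{w(a) : a ∈ A_k}` for some variable
word `w` in the variable span of an initial segment. -/
theorem stmt13 {α : Type*} (A : ℕ → Finset α) (hmono : Monotone A)
    (hne : ∀ n, (A n).Nonempty) (k : ℕ)
    (E : Set (List α)) (hE : E ⊆ WordsOver (⋃ n, (A n : Set α)))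
    (s : ℕ → List (Option α)) (hs : ∀ n, IsVarWord (⋃ n, (A n : Set α)) (s n))
    (hlarge : IsLarge (fun n => (A (k + n) : Set α)) E s) :
    ∃ (m : ℕ) (w : List (Option α)),
      w ∈ varSpan (fun n => (A (k + n) : Set α)) s (Set.Iic m) ∧
      ∀ a ∈ A k, substC w a ∈ E := by
  classical
  by_contra Hno
  set B : ℕ → Set α := fun n => ((A (k + n) : Finset α) : Set α) with hBdef
  let ch := chainSt A hmono k E s hs Hno
  let nx : ℕ → ℕ × List (ℕ × Option α) :=
    fun n => Classical.choose (exists_next A hmono k E s hs Hno n (ch n).1 (ch n).2)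
  have hspec : ∀ n, (ch n).1.1 < (nx n).1 ∧
      GoodV B (Set.Ico (ch n).1.1 (nx n).1) (nx n).2 ∧
      none ∈ spanW s (nx n).2 ∧
      (∀ u ∈ (ch n).1.2, ∀ a ∈ A (k + n), u ++ substC (spanW s (nx n).2) a ∉ E) ∧
      StInv A k E s (n + 1) ((nx n).1, newP A k n (ch n).1.2 (spanW s (nx n).2)) :=
    fun n => Classical.choose_spec (exists_next A hmono k E s hs Hno n (ch n).1 (ch n).2)
  let t : ℕ → List (Option α) := fun n => spanW s (nx n).2
  let m : ℕ → ℕ := fun n => (ch n).1.1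
  let Pf : ℕ → Finset (List α) := fun n => (ch n).1.2
  have hsucc : ∀ n, (ch (n + 1)).1 = ((nx n).1, newP A k n (Pf n) (t n)) := fun n => rfl
  have hm0 : m 0 = 0 := rfl
  have hmsucc : ∀ n, m n < m (n + 1) := by
    intro n
    have : m (n + 1) = (nx n).1 := congrArg Prod.fst (hsucc n)
    rw [this]
    exact (hspec n).1
  have hmmono : StrictMono m := strictMono_nat_of_lt_succ hmsucc
  have hvar : ∀ n, t n ∈ varSpan B s (Set.Ico (m n) (m (n + 1))) := by
    intro n
    have hmeq : m (n + 1) = (nx n).1 := congrArg Prod.fst (hsucc n)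
    have := mem_varSpan_of_list (s := s) (hspec n).2.1 (hspec n).2.2.1
    rw [hmeq]
    exact this
  have hext : Extracted B s t := fun L => ⟨m, hm0, hmmono, fun i _ => hvar i⟩
  obtain ⟨z, hzE, hzc⟩ := hlarge t hext
  -- membership of span words in the prefix sets
  have h0 : ∀ j, [] ∈ Pf j := fun j => (ch j).2.2.1
  have hPsub : ∀ n, Pf n ⊆ Pf (n + 1) := by
    intro n
    have : Pf (n + 1) = newP A k n (Pf n) (t n) := congrArg Prod.snd (hsucc n)
    rw [this, newP]
    exact Finset.subset_union_left
  have hPm : ∀ i j, i ≤ j → Pf i ⊆ Pf j := by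
    intro i j hij
    induction j, hij using Nat.le_induction with
    | base => exact subset_rfl
    | succ j hij ih => exact ih.trans (hPsub j)
  have hstepP : ∀ j u a, u ∈ Pf j → a ∈ A (k + j) → u ++ substC (t j) a ∈ Pf (j + 1) := by
    intro j u a hu ha
    have heq : Pf (j + 1) = newP A k j (Pf j) (t j) := congrArg Prod.snd (hsucc j)
    rw [heq, newP, Finset.mem_union]
    right
    rw [Finset.mem_image]
    exact ⟨(u, a), Finset.mem_product.mpr ⟨hu, ha⟩, rfl⟩
  obtain ⟨n, l, a, hsm, -, haB, hz⟩ := hzc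
  have hmem : z ∈ Pf (l (Fin.last n) + 1) := by
    rw [hz]
    exact flatten_mem A k t Pf h0 hPm hstepP n l a hsm haB
  have hzne : z ≠ [] := by
    rw [hz, List.ofFn_succ]
    intro hcon
    rw [List.flatten_cons, List.append_eq_nil_iff] at hcon
    have h1 : none ∈ t (l 0) := (hspec (l 0)).2.2.1
    have h2 : t (l 0) ≠ [] := List.ne_nil_of_mem h1
    have h3 : substC (t (l 0)) (a 0) = [] := hcon.1
    rw [substC] at h3
    exact h2 (List.map_eq_nil_iff.mp h3)
  exact ((ch (l (Fin.last n) + 1)).2.2.2 z hmem).1 hzne hzE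
end

section
/- Let (A_n)_{n=0}^∞ be an increasing sequence of finite nonempty alphabets with union A, let k ∈ ℕ, let E ⊆ W(A), and let 𝐬 = (s_n(x))_{n=0}^∞ be an infinite sequence of variable words over A such that E is k-large in 𝐬. Then there exists n_0 ∈ ℕ such that for every word z ∈ ⟨(s_i(x))_{i=n_0+1}^∞ ∥ (A_{k+i})_{i=n_0+1}^∞⟩_c there exists a variable word w(x) ∈ ⟨(s_i(x))_{i=0}^{n_0} ∥ (A_{k+i})_{i=0}^{n_0}⟩_v with {w(a)z : a ∈ A_k} ⊆ E (where w(a)z denotes concatenation). -/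
namespace HJAux
open HJ

variable {α β : Type*}

/-- Flatten a list of substituted variable pieces. -/
def piecesV (s : ℕ → List (Option α)) (L : List (ℕ × Option α)) : List (Option α) :=
  (L.map fun q => substV (s q.1) q.2).flatten

def piecesC (s : ℕ → List (Option α)) (L : List (ℕ × α)) : List α :=
  (L.map fun q => substC (s q.1) q.2).flatten

lemma piecesV_append (s : ℕ → List (Option α)) (L₁ L₂ : List (ℕ × Option α)) :
    piecesV s (L₁ ++ L₂) = piecesV s L₁ ++ piecesV s L₂ := by
  simp [piecesV]

lemma piecesC_append (s : ℕ → List (Option α)) (L₁ L₂ : List (ℕ × α)) :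
    piecesC s (L₁ ++ L₂) = piecesC s L₁ ++ piecesC s L₂ := by
  simp [piecesC]

lemma substC_append (w₁ w₂ : List (Option α)) (a : α) :
    substC (w₁ ++ w₂) a = substC w₁ a ++ substC w₂ a := by
  simp [substC]

lemma substC_map_some (w : List α) (a : α) : substC (w.map some) a = w := by
  simp only [substC, List.map_map]
  have : ((fun b : Option α => b.getD a) ∘ some) = id := by funext b; rfl
  rw [this, List.map_id]

lemma map_some_substC (w : List (Option α)) (a : α) :
    (substC w a).map some = substV w (some a) := by
  simp only [substC, substV, List.map_map]
  congr 1
  funext b; cases b <;> rfl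

lemma substC_substV (u : List (Option α)) (b : Option α) (a : α) :
    substC (substV u b) a = substC u (b.getD a) := by
  simp only [substC, substV, List.map_map]
  congr 1
  funext c; cases c <;> cases b <;> rfl

lemma substV_none (u : List (Option α)) : substV u none = u := by
  simp only [substV]
  have : (fun c : Option α => Option.elim c none some) = id := by
    funext c; cases c <;> rfl
  rw [this, List.map_id]

lemma substC_piecesV (s : ℕ → List (Option α)) (L : List (ℕ × Option α)) (a : α) :
    substC (piecesV s L) a = piecesC s (L.map fun q => (q.1, q.2.getD a)) := by
  induction L with
  | nil => rfl
  | cons q L ih =>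
      simp only [piecesV, piecesC, List.map_cons, List.flatten_cons] at *
      rw [substC_append, ih, substC_substV]

lemma map_some_piecesC (s : ℕ → List (Option α)) (L : List (ℕ × α)) :
    (piecesC s L).map some = piecesV s (L.map fun q => (q.1, some q.2)) := by
  induction L with
  | nil => rfl
  | cons q L ih =>
      simp only [piecesV, piecesC, List.map_cons, List.flatten_cons] at *
      rw [List.map_append, ih, map_some_substC]

lemma exists_bound (L : List (ℕ × β)) : ∃ M : ℕ, ∀ q ∈ L, q.1 < M := by
  induction L with
  | nil => exact ⟨0, by simp⟩
  | cons q L ih =>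
      obtain ⟨M, hM⟩ := ih
      exact ⟨max (q.1 + 1) M, by
        rintro p hp
        rcases List.mem_cons.mp hp with rfl | hp
        · exact lt_of_lt_of_le (Nat.lt_succ_self _) (le_max_left _ _)
        · exact lt_of_lt_of_le (hM p hp) (le_max_right _ _)⟩

lemma constSpan_iff {B : ℕ → Set α} {s : ℕ → List (Option α)} {I : Set ℕ} {w : List α} :
    w ∈ constSpan B s I ↔ ∃ L : List (ℕ × α), L ≠ [] ∧
      L.Pairwise (fun p q => p.1 < q.1) ∧ (∀ q ∈ L, q.1 ∈ I ∧ q.2 ∈ B q.1) ∧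
      w = piecesC s L := by
  constructor
  · rintro ⟨n, l, a, hmono, hI, hB, rfl⟩
    refine ⟨List.ofFn (fun i => (l i, a i)), ?_, ?_, ?_, ?_⟩
    · intro h
      have := congrArg List.length h
      simp at this
    · rw [List.pairwise_ofFn]
      intro i j hij
      exact hmono hij
    · intro q hq
      rw [List.mem_ofFn] at hq
      obtain ⟨i, rfl⟩ := hq
      exact ⟨hI i, hB i⟩
    · rw [piecesC, List.map_ofFn]; rfl
  · rintro ⟨L, hL0, hpw, hmem, rfl⟩
    rcases L with _ | ⟨q, L'⟩
    · exact absurd rfl hL0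
    · refine ⟨L'.length, fun i => ((q :: L').get i).1, fun i => ((q :: L').get i).2,
        ?_, ?_, ?_, ?_⟩
      · intro i j hij
        exact List.pairwise_iff_get.mp hpw i j hij
      · intro i; exact (hmem _ (List.get_mem _ _)).1
      · intro i; exact (hmem _ (List.get_mem _ _)).2
      · rw [piecesC]
        congr 1
        calc List.map (fun r => substC (s r.1) r.2) (q :: L')
            = List.map (fun r => substC (s r.1) r.2) (List.ofFn (q :: L').get) := by
              rw [List.ofFn_get]
          _ = _ := by rw [List.map_ofFn]; rfl

lemma varSpan_iff {B : ℕ → Set α} {s : ℕ → List (Option α)} {I : Set ℕ}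
    {w : List (Option α)} :
    w ∈ varSpan B s I ↔ ∃ L : List (ℕ × Option α), L ≠ [] ∧
      L.Pairwise (fun p q => p.1 < q.1) ∧
      (∀ q ∈ L, q.1 ∈ I ∧ ∀ a : α, q.2 = some a → a ∈ B q.1) ∧
      none ∈ w ∧ w = piecesV s L := by
  constructor
  · rintro ⟨n, l, b, hmono, hI, hB, hnone, rfl⟩
    refine ⟨List.ofFn (fun i => (l i, b i)), ?_, ?_, ?_, hnone, ?_⟩
    · intro h
      have := congrArg List.length h
      simp at this
    · rw [List.pairwise_ofFn]
      intro i j hij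
      exact hmono hij
    · intro q hq
      rw [List.mem_ofFn] at hq
      obtain ⟨i, rfl⟩ := hq
      exact ⟨hI i, hB i⟩
    · rw [piecesV, List.map_ofFn]; rfl
  · rintro ⟨L, hL0, hpw, hmem, hnone, rfl⟩
    rcases L with _ | ⟨q, L'⟩
    · exact absurd rfl hL0
    · refine ⟨L'.length, fun i => ((q :: L').get i).1, fun i => ((q :: L').get i).2,
        ?_, ?_, ?_, hnone, ?_⟩
      · intro i j hij
        exact List.pairwise_iff_get.mp hpw i j hij
      · intro i; exact (hmem _ (List.get_mem _ _)).1
      · intro i; exact (hmem _ (List.get_mem _ _)).2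
      · rw [piecesV]
        congr 1
        calc List.map (fun r => substV (s r.1) r.2) (q :: L')
            = List.map (fun r => substV (s r.1) r.2) (List.ofFn (q :: L').get) := by
              rw [List.ofFn_get]
          _ = _ := by rw [List.map_ofFn]; rfl

lemma piecesC_singleton (s : ℕ → List (Option α)) (q : ℕ × α) :
    piecesC s [q] = substC (s q.1) q.2 := by simp [piecesC]

/-- The invariant of the recursive construction. -/
def Inv (A : ℕ → Finset α) (k : ℕ) (E : Set (List α)) (s : ℕ → List (Option α))
    (j : ℕ) (m : ℕ → ℕ) (t : ℕ → List (Option α)) (G : List (List α)) : Prop :=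
  m 0 = 0 ∧ (∀ i < j, m i < m (i + 1)) ∧
  (∀ i < j, t i ∈ varSpan (fun r => (A (k + r) : Set α)) s (Set.Ico (m i) (m (i + 1)))) ∧
  (∀ p ∈ G, p ∉ E) ∧
  (∀ p ∈ G, ∃ L : List (ℕ × α), L.Pairwise (fun u v => u.1 < v.1) ∧
      (∀ q ∈ L, q.1 < m j ∧ q.2 ∈ A (k + q.1)) ∧ p = piecesC s L) ∧
  (∀ L : List (ℕ × α), L ≠ [] → L.Pairwise (fun u v => u.1 < v.1) →
      (∀ q ∈ L, q.1 < j ∧ q.2 ∈ A (k + q.1)) → piecesC t L ∈ G)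

lemma le_m {m : ℕ → ℕ} {j : ℕ} (h0 : m 0 = 0) (hlt : ∀ i < j, m i < m (i + 1)) :
    ∀ i ≤ j, i ≤ m i := by
  intro i hi
  induction i with
  | zero => omega
  | succ i ih =>
      have h1 := hlt i (by omega)
      have h2 := ih (by omega)
      omega

lemma step (A : ℕ → Finset α) (hmono : Monotone A) (k : ℕ)
    (E : Set (List α)) (s : ℕ → List (Option α)) (hs : ∀ n, none ∈ s n)
    (hneg : ∀ n₀ : ℕ, ∃ z ∈ constSpan (fun r => (A (k + r) : Set α)) s (Set.Ioi n₀),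
      ∀ w ∈ varSpan (fun r => (A (k + r) : Set α)) s (Set.Iic n₀),
        ∃ a ∈ A k, substC w a ++ z ∉ E)
    (j : ℕ) (m : ℕ → ℕ) (t : ℕ → List (Option α)) (G : List (List α))
    (hInv : Inv A k E s j m t G) :
    ∃ (m' : ℕ → ℕ) (t' : ℕ → List (Option α)) (G' : List (List α)),
      Inv A k E s (j + 1) m' t' G' ∧ (∀ i ≤ j, m' i = m i) ∧ (∀ i < j, t' i = t i) := by
  classical
  obtain ⟨hm0, hmlt, hts, hGE, hGrep, hGfull⟩ := hInv
  have hjm : j ≤ m j := le_m hm0 hmlt j le_rfl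
  set mj := m j with hmj
  set P : List (List α) := [] :: G with hP
  -- Hales–Jewett
  obtain ⟨ι, ιfin, hHJ⟩ := Combinatorics.Line.exists_mono_in_high_dimension
    (↥(A (k + mj))) (Fin P.length → Bool)
  set n := Fintype.card ι with hn
  set e : ι ≃ Fin n := Fintype.equivFin ι with he
  obtain ⟨z, hz, hbad⟩ := hneg (mj + n)
  obtain ⟨Lz, hLz0, hLzpw, hLzmem, hLzeq⟩ := constSpan_iff.mp hz
  obtain ⟨Mz, hMz⟩ := exists_bound Lz
  set W : (ι → ↥(A (k + mj))) → List α := fun f =>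
    piecesC s (List.ofFn fun i : Fin n => (mj + (i : ℕ), (f (e.symm i) : α))) with hW
  obtain ⟨l, c₀, hline⟩ := hHJ (fun f ip => decide (P.get ip ++ (W f ++ z) ∈ E))
  obtain ⟨i₀, hi₀⟩ := l.proper
  have hn0 : 0 < n := Fintype.card_pos_iff.mpr ⟨i₀⟩
  set Lv : List (ℕ × Option α) :=
    List.ofFn (fun i : Fin n => (mj + (i : ℕ), (l.idxFun (e.symm i)).map Subtype.val)) with hLv
  set v : List (Option α) := piecesV s Lv with hv
  have hLv0 : Lv ≠ [] := by
    rw [hLv]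
    intro h
    have := congrArg List.length h
    simp at this
    omega
  have hLvpw : Lv.Pairwise (fun u w => u.1 < w.1) := by
    rw [hLv, List.pairwise_ofFn]
    intro i jj hij
    simpa using hij
  have hLvmem : ∀ q ∈ Lv, (mj ≤ q.1 ∧ q.1 < mj + n) ∧
      ∀ a : α, q.2 = some a → a ∈ A (k + q.1) := by
    intro q hq
    rw [hLv, List.mem_ofFn] at hq
    obtain ⟨i, rfl⟩ := hq
    dsimp only
    refine ⟨⟨Nat.le_add_right _ _, by simpa using i.2⟩, ?_⟩
    intro a ha
    obtain ⟨u, _, rfl⟩ := Option.map_eq_some_iff.mp ha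
    exact hmono (by omega) u.2
  have hnonev : none ∈ v := by
    have hmem : ((mj + ((e i₀ : Fin n) : ℕ), (l.idxFun (e.symm (e i₀))).map Subtype.val) : ℕ × Option α) ∈ Lv := by
      rw [hLv]
      exact List.mem_ofFn.mpr ⟨e i₀, rfl⟩
    have h2 : substV (s (mj + ((e i₀ : Fin n) : ℕ))) ((l.idxFun (e.symm (e i₀))).map Subtype.val)
        ∈ Lv.map (fun q => substV (s q.1) q.2) := List.mem_map_of_mem hmem
    rw [hv, piecesV]
    refine List.mem_flatten.mpr ⟨_, h2, ?_⟩
    rw [Equiv.symm_apply_apply, hi₀]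
    simp only [Option.map_none]
    rw [substV_none]
    exact hs _
  have hsubv : ∀ (a : α) (ha : a ∈ A (k + mj)), substC v a = W (l ⟨a, ha⟩) := by
    intro a ha
    rw [hv, substC_piecesV]
    simp only [hW]
    congr 1
    rw [hLv, List.map_ofFn]
    congr 1
    funext i
    simp only [Function.comp]
    cases h : l.idxFun (e.symm i) with
    | none => simp [Combinatorics.Line.coe_apply, h]
    | some u => simp [Combinatorics.Line.coe_apply, h]
  -- the key forbidden-extension property
  have hgood : ∀ p ∈ P, ∀ c ∈ A (k + mj), p ++ (substC v c ++ z) ∉ E := by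
    intro p hp c hc
    have hrep : ∃ Lp : List (ℕ × Option α), Lp.Pairwise (fun u w => u.1 < w.1) ∧
        (∀ q ∈ Lp, q.1 < mj ∧ ∀ a : α, q.2 = some a → a ∈ A (k + q.1)) ∧
        p.map some = piecesV s Lp := by
      rcases List.mem_cons.mp hp with rfl | hpG
      · exact ⟨[], by simp, by simp, rfl⟩
      · obtain ⟨L, hLpw, hLmem, rfl⟩ := hGrep p hpG
        refine ⟨L.map fun q => (q.1, some q.2), ?_, ?_, map_some_piecesC s L⟩
        · exact List.pairwise_map.mpr (by simpa using hLpw)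
        · intro q hq
          rw [List.mem_map] at hq
          obtain ⟨r, hr, rfl⟩ := hq
          refine ⟨(hLmem r hr).1, ?_⟩
          rintro a ha
          obtain rfl : r.2 = a := by simpa using ha
          exact (hLmem r hr).2
    obtain ⟨Lp, hLppw, hLpmem, hLpeq⟩ := hrep
    have hwv : p.map some ++ v ∈ varSpan (fun r => (A (k + r) : Set α)) s (Set.Iic (mj + n)) := by
      rw [varSpan_iff]
      refine ⟨Lp ++ Lv, ?_, ?_, ?_, ?_, ?_⟩
      · intro hcon
        exact hLv0 (List.append_eq_nil_iff.mp hcon).2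
      · rw [List.pairwise_append]
        exact ⟨hLppw, hLvpw, fun u hu w hw =>
          lt_of_lt_of_le (hLpmem u hu).1 ((hLvmem w hw).1.1)⟩
      · intro q hq
        rcases List.mem_append.mp hq with hq | hq
        · exact ⟨le_of_lt (lt_of_lt_of_le (hLpmem q hq).1 (Nat.le_add_right _ _)),
            fun a ha => Finset.mem_coe.mpr ((hLpmem q hq).2 a ha)⟩
        · exact ⟨le_of_lt (hLvmem q hq).1.2,
            fun a ha => Finset.mem_coe.mpr ((hLvmem q hq).2 a ha)⟩
      · exact List.mem_append.mpr (Or.inr hnonev)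
      · rw [piecesV_append, hLpeq, hv]
    obtain ⟨a, haAk, hnotE⟩ := hbad _ hwv
    have heq : substC (List.map some p ++ v) a ++ z = p ++ (substC v a ++ z) := by
      rw [substC_append, substC_map_some, List.append_assoc]
    rw [heq] at hnotE
    have haA : a ∈ A (k + mj) := hmono (Nat.le_add_right k mj) haAk
    obtain ⟨ip, hip⟩ := List.mem_iff_get.mp hp
    have h1 : decide (P.get ip ++ (W (l ⟨a, haA⟩) ++ z) ∈ E) = c₀ ip :=
      congrFun (hline ⟨a, haA⟩) ip
    have h2 : decide (P.get ip ++ (W (l ⟨c, hc⟩) ++ z) ∈ E) = c₀ ip :=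
      congrFun (hline ⟨c, hc⟩) ip
    have hiff := decide_eq_decide.mp (h1.trans h2.symm)
    rw [hip, ← hsubv a haA, ← hsubv c hc] at hiff
    exact fun hcontra => hnotE (hiff.mpr hcontra)
  -- construct the new block
  set M := max (mj + n + 1) Mz with hM
  set Lz' : List (ℕ × Option α) := Lz.map (fun q => (q.1, some q.2)) with hLz'
  set tj : List (Option α) := v ++ z.map some with htj
  have hMgt : mj < M := by
    have : mj + n + 1 ≤ M := le_max_left _ _
    omega
  have hMz' : Mz ≤ M := le_max_right _ _
  have hLzmem' : ∀ q ∈ Lz, mj + n < q.1 ∧ q.1 < Mz ∧ q.2 ∈ A (k + q.1) := by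
    intro q hq
    exact ⟨(hLzmem q hq).1, hMz q hq, Finset.mem_coe.mp (hLzmem q hq).2⟩
  have hLLpw : (Lv ++ Lz').Pairwise (fun u w => u.1 < w.1) := by
    rw [List.pairwise_append]
    refine ⟨hLvpw, List.pairwise_map.mpr (by simpa using hLzpw), ?_⟩
    intro u hu w hw
    rw [hLz', List.mem_map] at hw
    obtain ⟨r, hr, rfl⟩ := hw
    exact lt_trans (hLvmem u hu).1.2 (hLzmem' r hr).1
  have hLLmem : ∀ q ∈ Lv ++ Lz', (mj ≤ q.1 ∧ q.1 < M) ∧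
      ∀ a : α, q.2 = some a → a ∈ A (k + q.1) := by
    intro q hq
    rcases List.mem_append.mp hq with hq | hq
    · exact ⟨⟨(hLvmem q hq).1.1, lt_of_lt_of_le (hLvmem q hq).1.2 (by omega)⟩,
        (hLvmem q hq).2⟩
    · rw [hLz', List.mem_map] at hq
      obtain ⟨r, hr, rfl⟩ := hq
      dsimp only
      refine ⟨⟨by have := (hLzmem' r hr).1; omega,
        by have := (hLzmem' r hr).2.1; omega⟩, ?_⟩
      rintro a ha
      obtain rfl : r.2 = a := by simpa using ha
      exact (hLzmem' r hr).2.2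
  have htjeq : tj = piecesV s (Lv ++ Lz') := by
    rw [htj, piecesV_append, hv, hLzeq, map_some_piecesC, hLz']
  have hnonetj : none ∈ tj := by
    rw [htj]
    exact List.mem_append.mpr (Or.inl hnonev)
  have htjvar : tj ∈ varSpan (fun r => (A (k + r) : Set α)) s (Set.Ico mj M) := by
    rw [varSpan_iff]
    refine ⟨Lv ++ Lz', fun hcon => hLv0 (List.append_eq_nil_iff.mp hcon).1, hLLpw, ?_,
      hnonetj, htjeq⟩
    intro q hq
    exact ⟨⟨(hLLmem q hq).1.1, (hLLmem q hq).1.2⟩,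
      fun a ha => Finset.mem_coe.mpr ((hLLmem q hq).2 a ha)⟩
  have hsubtj : ∀ c : α, substC tj c = substC v c ++ z := by
    intro c
    rw [htj, substC_append, substC_map_some]
  -- representation of `substC tj c` as pieces of `s`
  have htjrep : ∀ c ∈ A (k + mj), ∃ Lt : List (ℕ × α),
      Lt.Pairwise (fun u w => u.1 < w.1) ∧
      (∀ q ∈ Lt, (mj ≤ q.1 ∧ q.1 < M) ∧ q.2 ∈ A (k + q.1)) ∧
      substC tj c = piecesC s Lt := by
    intro c hc
    refine ⟨(Lv ++ Lz').map (fun q => (q.1, q.2.getD c)), ?_, ?_, ?_⟩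
    · exact List.pairwise_map.mpr (by simpa using hLLpw)
    · intro q hq
      rw [List.mem_map] at hq
      obtain ⟨r, hr, rfl⟩ := hq
      dsimp only
      refine ⟨(hLLmem r hr).1, ?_⟩
      cases hr2 : r.2 with
      | none => simpa [hr2] using hmono (by have := (hLLmem r hr).1.1; omega) hc
      | some a => simpa [hr2] using (hLLmem r hr).2 a hr2
    · rw [htjeq, substC_piecesV]
  -- new data
  set G' : List (List α) := G ++ (P.flatMap fun p => (A (k + mj)).toList.map fun c => p ++ substC tj c) with hG'
  set m' : ℕ → ℕ := fun i => if i ≤ j then m i else M with hm'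
  set t' : ℕ → List (Option α) := fun i => if i = j then tj else t i with ht'
  have hm'j : m' j = mj := by simp [hm', hmj]
  have hm'j1 : m' (j + 1) = M := by simp [hm']
  have ht'j : t' j = tj := by simp [ht']
  refine ⟨m', t', G', ⟨?_, ?_, ?_, ?_, ?_, ?_⟩, fun i hi => by simp [hm', hi],
    fun i hi => by simp [ht', Nat.ne_of_lt hi]⟩
  · simp [hm', hm0]
  · intro i hi
    rcases Nat.lt_succ_iff_lt_or_eq.mp hi with hi | rfl
    · have e1 : m' i = m i := by simp [hm', le_of_lt hi]
      have e2 : m' (i + 1) = m (i + 1) := by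
        simp only [hm']
        rw [if_pos (show i + 1 ≤ j from hi)]
      rw [e1, e2]; exact hmlt i hi
    · rw [hm'j, hm'j1]; exact hMgt
  · intro i hi
    rcases Nat.lt_succ_iff_lt_or_eq.mp hi with hi | rfl
    · have e1 : m' i = m i := by simp [hm', le_of_lt hi]
      have e2 : m' (i + 1) = m (i + 1) := by
        simp only [hm']
        rw [if_pos (show i + 1 ≤ j from hi)]
      have e3 : t' i = t i := by simp [ht', Nat.ne_of_lt hi]
      rw [e1, e2, e3]; exact hts i hi
    · rw [hm'j, hm'j1, ht'j]; exact htjvar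
  · -- no element of G' is in E
    intro p hp
    rw [hG', List.mem_append] at hp
    rcases hp with hp | hp
    · exact hGE p hp
    · rw [List.mem_flatMap] at hp
      obtain ⟨p₀, hp₀, hp⟩ := hp
      rw [List.mem_map] at hp
      obtain ⟨c, hc, rfl⟩ := hp
      rw [hsubtj c]
      exact hgood p₀ hp₀ c (Finset.mem_toList.mp hc)
  · -- representability of G' below m' (j+1) = M
    intro p hp
    rw [hG', List.mem_append] at hp
    rcases hp with hp | hp
    · obtain ⟨L, hLpw, hLmem, rfl⟩ := hGrep p hp
      refine ⟨L, hLpw, fun q hq => ⟨?_, (hLmem q hq).2⟩, rfl⟩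
      rw [hm'j1]
      have := (hLmem q hq).1
      omega
    · rw [List.mem_flatMap] at hp
      obtain ⟨p₀, hp₀, hp⟩ := hp
      rw [List.mem_map] at hp
      obtain ⟨c, hc, rfl⟩ := hp
      have hc' : c ∈ A (k + mj) := Finset.mem_toList.mp hc
      obtain ⟨Lp, hLppw, hLpmem, hp₀eq⟩ : ∃ Lp : List (ℕ × α),
          Lp.Pairwise (fun u w => u.1 < w.1) ∧
          (∀ q ∈ Lp, q.1 < mj ∧ q.2 ∈ A (k + q.1)) ∧ p₀ = piecesC s Lp := by
        rcases List.mem_cons.mp hp₀ with rfl | h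
        · exact ⟨[], by simp, by simp, rfl⟩
        · exact hGrep p₀ h
      obtain ⟨Lt, hLtpw, hLtmem, hLteq⟩ := htjrep c hc'
      refine ⟨Lp ++ Lt, ?_, ?_, ?_⟩
      · rw [List.pairwise_append]
        exact ⟨hLppw, hLtpw, fun u hu w hw =>
          lt_of_lt_of_le (hLpmem u hu).1 ((hLtmem w hw).1.1)⟩
      · intro q hq
        rw [hm'j1]
        rcases List.mem_append.mp hq with hq | hq
        · exact ⟨by have := (hLpmem q hq).1; omega, (hLpmem q hq).2⟩
        · exact ⟨(hLtmem q hq).1.2, (hLtmem q hq).2⟩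
      · rw [piecesC_append, hp₀eq, hLteq]
  · -- completeness of G'
    intro L hL0 hpw hmem
    rcases L.eq_nil_or_concat' with rfl | ⟨L₀, q, rfl⟩
    · exact absurd rfl hL0
    · have hq : q.1 < j + 1 ∧ q.2 ∈ A (k + q.1) := hmem q (by simp)
      have hpw' := List.pairwise_append.mp hpw
      have hcross : ∀ r ∈ L₀, r.1 < q.1 := fun r hr => hpw'.2.2 r hr q (by simp)
      have hL₀pw : L₀.Pairwise (fun u v => u.1 < v.1) := hpw'.1
      have hsplit : piecesC t' (L₀ ++ [q]) = piecesC t' L₀ ++ substC (t' q.1) q.2 := by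
        rw [piecesC_append, piecesC_singleton]
      rcases Nat.lt_succ_iff_lt_or_eq.mp hq.1 with hq1 | hq1
      · -- all indices < j
        have hall : ∀ r ∈ L₀ ++ [q], r.1 < j ∧ r.2 ∈ A (k + r.1) := by
          intro r hr
          rcases List.mem_append.mp hr with hr' | hr'
          · exact ⟨lt_trans (hcross r hr') hq1, (hmem r hr).2⟩
          · obtain rfl : r = q := by simpa using hr'
            exact ⟨hq1, hq.2⟩
        have hagree : piecesC t' (L₀ ++ [q]) = piecesC t (L₀ ++ [q]) := by
          unfold piecesC
          congr 1
          apply List.map_congr_left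
          intro r hr
          have hne : r.1 ≠ j := Nat.ne_of_lt (hall r hr).1
          simp [ht', hne]
        rw [hG', hagree]
        exact List.mem_append.mpr (Or.inl (hGfull _ (by simp) hpw hall))
      · -- top index is j
        have hc' : q.2 ∈ A (k + mj) := hmono (by omega) (hq1 ▸ hq.2)
        have hagree0 : piecesC t' L₀ = piecesC t L₀ := by
          unfold piecesC
          congr 1
          apply List.map_congr_left
          intro r hr
          have hne : r.1 ≠ j := by
            have := hcross r hr
            omega
          simp [ht', hne]
        have hp₀ : piecesC t L₀ ∈ P := by
          rcases List.eq_nil_or_concat L₀ with rfl | ⟨L₁, r₁, rfl⟩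
          · rw [hP]
            simp [piecesC]
          · refine List.mem_cons.mpr (Or.inr (hGfull _ (by simp) hL₀pw ?_))
            intro r hr
            refine ⟨by have := hcross r hr; omega, (hmem r (List.mem_append.mpr (Or.inl hr))).2⟩
        have ht'q : t' q.1 = tj := by rw [hq1]; exact ht'j
        rw [hsplit, hagree0, ht'q, hG']
        refine List.mem_append.mpr (Or.inr ?_)
        rw [List.mem_flatMap]
        exact ⟨piecesC t L₀, hp₀, List.mem_map.mpr ⟨q.2, Finset.mem_toList.mpr hc', rfl⟩⟩

lemma Inv_zero (A : ℕ → Finset α) (k : ℕ) (E : Set (List α)) (s : ℕ → List (Option α)) :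
    Inv A k E s 0 (fun _ => 0) (fun _ => []) [] := by
  refine ⟨rfl, fun i hi => absurd hi (Nat.not_lt_zero i),
    fun i hi => absurd hi (Nat.not_lt_zero i), by simp, by simp, ?_⟩
  intro L hL0 _ hmem
  rcases L with _ | ⟨q, L'⟩
  · exact absurd rfl hL0
  · exact absurd (hmem q (by simp)).1 (Nat.not_lt_zero _)

variable (A : ℕ → Finset α) (k : ℕ) (E : Set (List α)) (s : ℕ → List (Option α))
variable (hstep : ∀ (j : ℕ) (m : ℕ → ℕ) (t : ℕ → List (Option α)) (G : List (List α)),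
      Inv A k E s j m t G →
      ∃ (m' : ℕ → ℕ) (t' : ℕ → List (Option α)) (G' : List (List α)),
        Inv A k E s (j + 1) m' t' G' ∧ (∀ i ≤ j, m' i = m i) ∧ (∀ i < j, t' i = t i))

noncomputable def seqF :
    (j : ℕ) → {x : (ℕ → ℕ) × (ℕ → List (Option α)) × List (List α) //
      Inv A k E s j x.1 x.2.1 x.2.2} :=
  Nat.rec ⟨⟨fun _ => 0, fun _ => [], []⟩, Inv_zero A k E s⟩
    (fun j ih =>
      ⟨⟨(hstep j ih.1.1 ih.1.2.1 ih.1.2.2 ih.2).choose,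
        (hstep j ih.1.1 ih.1.2.1 ih.1.2.2 ih.2).choose_spec.choose,
        (hstep j ih.1.1 ih.1.2.1 ih.1.2.2 ih.2).choose_spec.choose_spec.choose⟩,
       (hstep j ih.1.1 ih.1.2.1 ih.1.2.2 ih.2).choose_spec.choose_spec.choose_spec.1⟩)

lemma seqF_agree (j : ℕ) :
    (∀ i ≤ j, (seqF A k E s hstep (j + 1)).1.1 i = (seqF A k E s hstep j).1.1 i) ∧
    (∀ i < j, (seqF A k E s hstep (j + 1)).1.2.1 i = (seqF A k E s hstep j).1.2.1 i) := by
  have h := (hstep j (seqF A k E s hstep j).1.1 (seqF A k E s hstep j).1.2.1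
      (seqF A k E s hstep j).1.2.2 (seqF A k E s hstep j).2).choose_spec.choose_spec.choose_spec
  exact ⟨h.2.1, h.2.2⟩

end HJAux

open HJ in
/-- Claim 1 of Lemma 3.10: a uniform head for all tails, `k`-version. -/
theorem stmt14 {α : Type*} (A : ℕ → Finset α) (hmono : Monotone A)
    (hne : ∀ n, (A n).Nonempty) (k : ℕ)
    (E : Set (List α)) (hE : E ⊆ WordsOver (⋃ n, (A n : Set α)))
    (s : ℕ → List (Option α)) (hs : ∀ n, IsVarWord (⋃ n, (A n : Set α)) (s n))
    (hlarge : IsLarge (fun n => (A (k + n) : Set α)) E s) :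
    ∃ n₀ : ℕ, ∀ z ∈ constSpan (fun n => (A (k + n) : Set α)) s (Set.Ioi n₀),
      ∃ w ∈ varSpan (fun n => (A (k + n) : Set α)) s (Set.Iic n₀),
        ∀ a ∈ A k, substC w a ++ z ∈ E := by
  classical
  by_contra hcon
  push_neg at hcon
  have hsnone : ∀ n, none ∈ s n := fun n => (hs n).2
  have hstep := HJAux.step A hmono k E s hsnone hcon
  set Φ := HJAux.seqF A k E s hstep with hΦ
  set minf : ℕ → ℕ := fun i => (Φ i).1.1 i with hminf
  set tinf : ℕ → List (Option α) := fun i => (Φ (i + 1)).1.2.1 i with htinf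
  have hmstab : ∀ j i, i ≤ j → (Φ j).1.1 i = minf i := by
    intro j
    induction j with
    | zero =>
        intro i hi
        obtain rfl : i = 0 := Nat.le_zero.mp hi
        rfl
    | succ j ih =>
        intro i hi
        rcases Nat.lt_succ_iff_lt_or_eq.mp (Nat.lt_succ_of_le hi) with hi' | rfl
        · have hagree := (HJAux.seqF_agree A k E s hstep j).1 i (by omega)
          rw [hΦ] at *
          rw [hagree]
          exact ih i (by omega)
        · rfl
  have htstab : ∀ j i, i < j → (Φ j).1.2.1 i = tinf i := by
    intro j
    induction j with
    | zero => intro i hi; exact absurd hi (Nat.not_lt_zero i)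
    | succ j ih =>
        intro i hi
        rcases Nat.lt_succ_iff_lt_or_eq.mp hi with hi' | rfl
        · have hagree := (HJAux.seqF_agree A k E s hstep j).2 i hi'
          rw [hΦ] at *
          rw [hagree]
          exact ih i hi'
        · rfl
  have hm0 : minf 0 = 0 := (Φ 0).2.1
  have hmlt : ∀ i, minf i < minf (i + 1) := by
    intro i
    have h2 := (Φ (i + 1)).2.2.1 i (Nat.lt_succ_self i)
    rwa [hmstab (i + 1) i (Nat.le_succ i)] at h2
  have htvar : ∀ i, tinf i ∈ varSpan (fun n => (A (k + n) : Set α)) s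
      (Set.Ico (minf i) (minf (i + 1))) := by
    intro i
    have h3 := (Φ (i + 1)).2.2.2.1 i (Nat.lt_succ_self i)
    rwa [hmstab (i + 1) i (Nat.le_succ i)] at h3
  have hext : Extracted (fun n => (A (k + n) : Set α)) s tinf := by
    intro L
    exact ⟨minf, hm0, strictMono_nat_of_lt_succ hmlt, fun i _ => htvar i⟩
  obtain ⟨u, huE, huspan⟩ := hlarge tinf hext
  obtain ⟨L, hL0, hpw, hmem, hueq⟩ := HJAux.constSpan_iff.mp huspan
  obtain ⟨J, hJ⟩ := HJAux.exists_bound L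
  have hueq2 : u = HJAux.piecesC (Φ J).1.2.1 L := by
    rw [hueq]
    unfold HJAux.piecesC
    congr 1
    apply List.map_congr_left
    intro q hq
    rw [htstab J q.1 (hJ q hq)]
  have hmemG : HJAux.piecesC (Φ J).1.2.1 L ∈ (Φ J).1.2.2 := by
    refine (Φ J).2.2.2.2.2.2 L hL0 hpw ?_
    intro q hq
    exact ⟨hJ q hq, Finset.mem_coe.mp (hmem q hq).2⟩
  exact (Φ J).2.2.2.2.1 _ hmemG (hueq2 ▸ huE)
end
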